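/- Let A, B ∈ ℝ^{n×n} with A invertible. If the spectral radius ρ(|A⁻¹B|) < 1, then for every f ∈ ℝⁿ the generalized absolute value equation Ax + B|x| = f has exactly one solution x ∈ ℝⁿ. -/

import Mathlib

open Matrix
open scoped ENNReal NNReal

attribute [local instance] Matrix.linftyOpNormedAddCommGroup Matrix.linftyOpNormedRing
  Matrix.linftyOpNormedAlgebra

/-- Spectral radius of a real square matrix: the supremum of |λ| over its complex
eigenvalues (the complex spectrum of the matrix viewed over ℂ). -/
noncomputable def specRad {m : Type*} [Fintype m] [DecidableEq m]
    (M : Matrix m m ℝ) : ℝ :=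
  sSup ((fun z : ℂ => ‖z‖) '' spectrum ℂ (M.map Complex.ofReal))

lemma nnnorm_map_ofReal {n : ℕ} (N : Matrix (Fin n) (Fin n) ℝ) :
    ‖N.map Complex.ofReal‖₊ = ‖N‖₊ := by
  simp_rw [Matrix.linfty_opNNNorm_def, Matrix.map_apply, Complex.nnnorm_real]

lemma map_ofReal_pow {n : ℕ} (N : Matrix (Fin n) (Fin n) ℝ) (k : ℕ) :
    (N.map Complex.ofReal) ^ k = (N ^ k).map Complex.ofReal := by
  exact (map_pow (Complex.ofRealHom.mapMatrix) N k).symm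

lemma exists_pow_nnnorm_lt {n : ℕ} (M : Matrix (Fin n) (Fin n) ℝ)
    (h : specRad M < 1) : ∃ k, 0 < k ∧ ‖M ^ k‖₊ < 1 := by
  set a := M.map Complex.ofReal with ha
  have hb : BddAbove ((fun z : ℂ => ‖z‖) '' spectrum ℂ a) :=
    ((spectrum.isCompact a).image continuous_norm).bddAbove
  have hsr : spectralRadius ℂ a < 1 := by
    have : spectralRadius ℂ a ≤ ENNReal.ofReal (specRad M) := by
      refine iSup₂_le fun z hz => ?_
      have hz' : ‖z‖ ≤ specRad M := le_csSup hb ⟨z, hz, rfl⟩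
      rw [← ENNReal.ofReal_coe_nnreal, coe_nnnorm]
      exact ENNReal.ofReal_le_ofReal hz'
    exact this.trans_lt (ENNReal.ofReal_lt_one.mpr h)
  have := (spectrum.pow_nnnorm_pow_one_div_tendsto_nhds_spectralRadius a).eventually_lt_const hsr
  obtain ⟨k, hk1, hk⟩ := ((Filter.eventually_ge_atTop 1).and this).exists
  refine ⟨k, hk1, ?_⟩
  rw [map_ofReal_pow, nnnorm_map_ofReal] at hk
  by_contra hcon
  push_neg at hcon
  have h1 : (1 : ℝ≥0∞) ≤ (‖M ^ k‖₊ : ℝ≥0∞) := by exact_mod_cast hcon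
  have : (1 : ℝ≥0∞) ≤ ((‖M ^ k‖₊ : ℝ≥0∞)) ^ (1 / (k : ℝ)) := by
    calc (1 : ℝ≥0∞) = (1 : ℝ≥0∞) ^ (1 / (k : ℝ)) := (ENNReal.one_rpow _).symm
    _ ≤ _ := ENNReal.rpow_le_rpow h1 (by positivity)
  exact absurd hk (not_lt.mpr this)
lemma mulVec_abs_le {n : ℕ} (C : Matrix (Fin n) (Fin n) ℝ) (u : Fin n → ℝ) (i : Fin n) :
    |C.mulVec u i| ≤ Matrix.mulVec (fun i j => |C i j|) (fun j => |u j|) i := by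
  simp only [Matrix.mulVec, dotProduct]
  calc |∑ j, C i j * u j| ≤ ∑ j, |C i j * u j| := Finset.abs_sum_le_sum_abs _ _
  _ = ∑ j, |C i j| * |u j| := by simp [abs_mul]

lemma mulVec_mono {n : ℕ} (M : Matrix (Fin n) (Fin n) ℝ) (hM : ∀ i j, 0 ≤ M i j)
    {u v : Fin n → ℝ} (huv : ∀ j, u j ≤ v j) (i : Fin n) : M.mulVec u i ≤ M.mulVec v i := by
  simp only [Matrix.mulVec, dotProduct]
  exact Finset.sum_le_sum fun j _ => mul_le_mul_of_nonneg_left (huv j) (hM i j)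

/-- If A is invertible and ρ(|A⁻¹B|) < 1, then for every f ∈ ℝⁿ the GAVE
Ax + B|x| = f has exactly one solution x ∈ ℝⁿ. -/
theorem gave_unique_solution {n : ℕ} (A B : Matrix (Fin n) (Fin n) ℝ)
    (hA : IsUnit A)
    (h : specRad (fun i j => |(A⁻¹ * B) i j| : Matrix (Fin n) (Fin n) ℝ) < 1) :
    ∀ f : Fin n → ℝ,
      ∃! x : Fin n → ℝ, A.mulVec x + B.mulVec (fun i => |x i|) = f := by
  intro f
  have hAdet : IsUnit A.det := A.isUnit_iff_isUnit_det.mp hA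
  set C : Matrix (Fin n) (Fin n) ℝ := A⁻¹ * B with hC
  set M : Matrix (Fin n) (Fin n) ℝ := fun i j => |C i j| with hM
  obtain ⟨k, hk1, hk⟩ := exists_pow_nnnorm_lt M h
  set T : (Fin n → ℝ) → (Fin n → ℝ) :=
    fun x => A⁻¹.mulVec f - C.mulVec (fun i => |x i|) with hT
  have hiff : ∀ x : Fin n → ℝ, (A.mulVec x + B.mulVec (fun i => |x i|) = f) ↔ T x = x := by
    intro x
    constructor
    · intro hx
      have h1 := congrArg (fun v => A⁻¹.mulVec v) hx
      simp only [Matrix.mulVec_add, Matrix.mulVec_mulVec, Matrix.nonsing_inv_mul A hAdet,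
        Matrix.one_mulVec] at h1
      rw [hT]
      simp only [← h1, ← hC, Matrix.mulVec_mulVec]
      funext i
      simp
    · intro hx
      have h1 := congrArg (fun v => A.mulVec v) hx
      simp only [hT, Matrix.mulVec_sub, Matrix.mulVec_mulVec, Matrix.mul_nonsing_inv A hAdet,
        Matrix.one_mulVec, hC, ← Matrix.mul_assoc, Matrix.mul_nonsing_inv_cancel_left] at h1
      rw [← h1]
      funext i
      simp [Matrix.mul_nonsing_inv_cancel_left A B hAdet]
  have hMnn : ∀ i j, 0 ≤ M i j := fun i j => abs_nonneg _
  have step : ∀ x y : Fin n → ℝ, ∀ i, |(T x - T y) i| ≤ M.mulVec (fun j => |(x - y) j|) i := by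
    intro x y i
    have e : T x - T y = C.mulVec ((fun j => |y j|) - (fun j => |x j|)) := by
      rw [hT, Matrix.mulVec_sub, sub_sub_sub_cancel_left]
    rw [e]
    refine le_trans (mulVec_abs_le C _ i) (mulVec_mono M hMnn (fun j => ?_) i)
    simpa [abs_sub_comm (y j) (x j), Pi.sub_apply] using abs_abs_sub_abs_le_abs_sub (y j) (x j)
  have key : ∀ m : ℕ, ∀ x y : Fin n → ℝ, ∀ i,
      |(T^[m] x - T^[m] y) i| ≤ ((M ^ m).mulVec (fun j => |(x - y) j|)) i := by
    intro m
    induction m with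
    | zero => intro x y i; simp [Matrix.one_mulVec]
    | succ m ih =>
      intro x y i
      rw [Function.iterate_succ_apply', Function.iterate_succ_apply']
      refine (step _ _ i).trans ?_
      calc M.mulVec (fun j => |(T^[m] x - T^[m] y) j|) i
          ≤ M.mulVec ((M ^ m).mulVec (fun j => |(x - y) j|)) i :=
            mulVec_mono M hMnn (fun j => ih x y j) i
        _ = ((M ^ (m+1)).mulVec (fun j => |(x - y) j|)) i := by
            rw [Matrix.mulVec_mulVec, ← pow_succ']
  have hLipk : LipschitzWith ‖M ^ k‖₊ (T^[k]) := by
    refine LipschitzWith.of_dist_le_mul fun x y => ?_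
    rw [dist_eq_norm, dist_eq_norm]
    have hnn : (0:ℝ) ≤ (‖M ^ k‖₊ : ℝ) * ‖x - y‖ := by positivity
    rw [pi_norm_le_iff_of_nonneg hnn]
    intro i
    have h1 := key k x y i
    have h2 : ((M ^ k).mulVec (fun j => |(x - y) j|)) i ≤ ‖(M ^ k).mulVec (fun j => |(x - y) j|)‖ :=
      le_trans (le_trans (le_abs_self _) (Real.norm_eq_abs _).symm.le) (norm_le_pi_norm _ i)
    have h3 : ‖(M ^ k).mulVec (fun j => |(x - y) j|)‖ ≤ ‖M ^ k‖ * ‖(fun j => |(x - y) j|)‖ :=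
      Matrix.linfty_opNorm_mulVec _ _
    have h4 : ‖(fun j => |(x - y) j| : Fin n → ℝ)‖ = ‖x - y‖ := by
      simp [Pi.norm_def, Real.nnnorm_abs]
    calc ‖(T^[k] x - T^[k] y) i‖ = |(T^[k] x - T^[k] y) i| := rfl
      _ ≤ _ := h1
      _ ≤ _ := h2
      _ ≤ _ := h3
      _ = (‖M ^ k‖₊ : ℝ) * ‖x - y‖ := by rw [h4]; rfl
  have hc : ContractingWith ‖M ^ k‖₊ (T^[k]) := ⟨hk, hLipk⟩
  have hfix : Function.IsFixedPt T (hc.fixedPoint (T^[k])) := hc.isFixedPt_fixedPoint_iterate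
  refine ⟨hc.fixedPoint (T^[k]), (hiff _).mpr hfix, fun y hy => ?_⟩
  exact hc.fixedPoint_unique (Function.IsFixedPt.iterate ((hiff y).mp hy) k)
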